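/- Let p, q, r be 3×3 complex matrices with p₃₁ = p₃₂ = 0, q₂₁ = q₃₁ = 0, and r₃₁ = r₃₂ = 0. For t ∈ ℂ with t ≠ 0 let S(t) denote the diagonal matrix diag(t, 1, t⁻¹). For nonzero t₁, t₂, t₃ ∈ ℂ, set P = S(t₁)⁻¹ p, Q = S(t₂)⁻¹ q, and R' = S(t₃)⁻¹ r. Then ((PQ)₁₁ (PQ)₂₂ − (PQ)₁₂ (PQ)₂₁) · (PQR')₁₁ = t₁⁻² t₂⁻² t₃⁻¹ · ( q₁₁ q₂₂ (p₁₁ p₂₂ − p₁₂ p₂₁) + t₂ q₁₁ q₃₂ (p₁₁ p₂₃ − p₁₃ p₂₁) ) · ( p₁₁ q₁₁ r₁₁ + (t₃ p₁₁ q₁₂ + t₂ t₃ p₁₂ q₂₂ + t₂² t₃ p₁₃ q₃₂) r₂₁ ). -/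

import Mathlib

set_option maxHeartbeats 1000000 in
/-- the explicit computation, in SL(3), of the standard-tableau section
Δ₁₂₁ evaluated at (S(t₁)⁻¹p, S(t₂)⁻¹q, S(t₃)⁻¹r), exhibiting the leading monomial
t₁⁻²t₂⁻²t₃⁻¹ (so the ℓ-vector of s₍₁₂₁₎ is (−2,−2,−1)). Indices are 0-based: `p 0 0`
is the paper's p₁₁. -/
theorem stmt_15 (p q r : Matrix (Fin 3) (Fin 3) ℂ)
    (hp1 : p 2 0 = 0) (hp2 : p 2 1 = 0)
    (hq1 : q 1 0 = 0) (hq2 : q 2 0 = 0)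
    (hr1 : r 2 0 = 0) (hr2 : r 2 1 = 0)
    (S : ℂ → Matrix (Fin 3) (Fin 3) ℂ)
    (hS : ∀ t : ℂ, S t = Matrix.diagonal ![t, 1, t⁻¹])
    (t₁ t₂ t₃ : ℂ) (ht₁ : t₁ ≠ 0) (ht₂ : t₂ ≠ 0) (ht₃ : t₃ ≠ 0)
    (P Q R' : Matrix (Fin 3) (Fin 3) ℂ)
    (hP : P = (S t₁)⁻¹ * p) (hQ : Q = (S t₂)⁻¹ * q) (hR' : R' = (S t₃)⁻¹ * r) :
    ((P * Q) 0 0 * (P * Q) 1 1 - (P * Q) 0 1 * (P * Q) 1 0) * (P * Q * R') 0 0 =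
      t₁ ^ (-2 : ℤ) * t₂ ^ (-2 : ℤ) * t₃ ^ (-1 : ℤ) *
        (q 0 0 * q 1 1 * (p 0 0 * p 1 1 - p 0 1 * p 1 0) +
          t₂ * (q 0 0 * q 2 1 * (p 0 0 * p 1 2 - p 0 2 * p 1 0))) *
        (p 0 0 * q 0 0 * r 0 0 +
          (t₃ * (p 0 0 * q 0 1) + t₂ * t₃ * (p 0 1 * q 1 1) +
            t₂ ^ 2 * t₃ * (p 0 2 * q 2 1)) * r 1 0) := by
  have hSinv : ∀ t : ℂ, t ≠ 0 → (S t)⁻¹ = Matrix.diagonal ![t⁻¹, 1, t] := by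
    intro t ht
    refine Matrix.inv_eq_right_inv ?_
    rw [hS, Matrix.diagonal_mul_diagonal]
    ext i j
    fin_cases i <;> fin_cases j <;>
      simp [Matrix.diagonal, Matrix.one_apply, mul_inv_cancel₀ ht, inv_mul_cancel₀ ht]
  subst hP hQ hR'
  rw [hSinv t₁ ht₁, hSinv t₂ ht₂, hSinv t₃ ht₃]
  have e00 : (Matrix.diagonal ![t₁⁻¹,1,t₁] * p * (Matrix.diagonal ![t₂⁻¹,1,t₂] * q)) 0 0
      = t₁⁻¹ * t₂⁻¹ * (p 0 0 * q 0 0) := by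
    simp [Matrix.mul_apply, Fin.sum_univ_three, hq1, hq2]; ring
  have e01 : (Matrix.diagonal ![t₁⁻¹,1,t₁] * p * (Matrix.diagonal ![t₂⁻¹,1,t₂] * q)) 0 1
      = t₁⁻¹ * (t₂⁻¹ * (p 0 0 * q 0 1) + p 0 1 * q 1 1 + t₂ * (p 0 2 * q 2 1)) := by
    simp [Matrix.mul_apply, Fin.sum_univ_three]; ring
  have e10 : (Matrix.diagonal ![t₁⁻¹,1,t₁] * p * (Matrix.diagonal ![t₂⁻¹,1,t₂] * q)) 1 0
      = t₂⁻¹ * (p 1 0 * q 0 0) := by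
    simp [Matrix.mul_apply, Fin.sum_univ_three, hq1, hq2]; ring
  have e11 : (Matrix.diagonal ![t₁⁻¹,1,t₁] * p * (Matrix.diagonal ![t₂⁻¹,1,t₂] * q)) 1 1
      = t₂⁻¹ * (p 1 0 * q 0 1) + p 1 1 * q 1 1 + t₂ * (p 1 2 * q 2 1) := by
    simp [Matrix.mul_apply, Fin.sum_univ_three]; ring
  have eR : (Matrix.diagonal ![t₁⁻¹,1,t₁] * p * (Matrix.diagonal ![t₂⁻¹,1,t₂] * q)
        * (Matrix.diagonal ![t₃⁻¹,1,t₃] * r)) 0 0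
      = (Matrix.diagonal ![t₁⁻¹,1,t₁] * p * (Matrix.diagonal ![t₂⁻¹,1,t₂] * q)) 0 0
          * (t₃⁻¹ * r 0 0)
        + (Matrix.diagonal ![t₁⁻¹,1,t₁] * p * (Matrix.diagonal ![t₂⁻¹,1,t₂] * q)) 0 1
          * r 1 0 := by
    rw [Matrix.mul_apply, Fin.sum_univ_three]
    simp [Matrix.mul_apply, Fin.sum_univ_three, hr1, hr2]
  rw [eR, e00, e01, e10, e11]
  simp only [zpow_neg, zpow_ofNat, zpow_one]
  rw [pow_one]
  field_simp
  ring
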